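/- In the group ℚˣ × ℚˣ (the direct product of two copies of the multiplicative group of nonzero rationals), let C = {1, −1} and P = (C × {b ∈ ℚˣ : |b| ≤ 1}) ∪ ((ℚˣ \ C) × {b ∈ ℚˣ : |b| < 1}). Then: (1) P is a submonoid of ℚˣ × ℚˣ; (2) P is closed under the map (a,b) ↦ (a⁻¹, b); (3) (5, 1/2) ∈ P but (5, 1) ∉ P, where (5,1) = (5,1/2)·(1,1/2)⁻¹. Hence the corresponding internal equivalence relation in right-preordered groups is a groupoid (inversion σ(a,b) = (a⁻¹,b) is monotone) but is not a Schreier internal category (the Schreier condition (a,b) ∈ P ⟹ (a,1) ∈ P fails). -/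
import Mathlib


/-- The subgroup `C² = {1, -1}` of `ℚˣ`. -/
def C2 : Set ℚˣ := {1, -1}

lemma memC2_iff (a : ℚˣ) : a ∈ C2 ↔ |(a : ℚ)| = 1 := by
  simp only [C2, Set.mem_insert_iff, Set.mem_singleton_iff, Units.ext_iff,
    Units.val_one, Units.val_neg, abs_eq (zero_le_one)]

lemma memC2_mul_left (a b : ℚˣ) (ha : a ∈ C2) : a * b ∈ C2 ↔ b ∈ C2 := by
  simp only [memC2_iff] at *
  rw [Units.val_mul, abs_mul, ha, one_mul]

lemma memC2_mul_right (a b : ℚˣ) (hb : b ∈ C2) : a * b ∈ C2 ↔ a ∈ C2 := by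
  simp only [memC2_iff] at *
  rw [Units.val_mul, abs_mul, hb, mul_one]

lemma memC2_inv (a : ℚˣ) : a⁻¹ ∈ C2 ↔ a ∈ C2 := by
  rw [memC2_iff, memC2_iff, Units.val_inv_eq_inv_val, abs_inv,
    inv_eq_one]

/-- The positive cone `(C² × ℚˣ_{|·|≤1}) ∪ ((ℚˣ \ C²) × ℚˣ_{|·|<1})` of `ℚˣ × ℚˣ`. -/
def groupoidCone : Set (ℚˣ × ℚˣ) :=
  {p | (p.1 ∈ C2 ∧ |(p.2 : ℚ)| ≤ 1) ∨ (p.1 ∉ C2 ∧ |(p.2 : ℚ)| < 1)}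

lemma cone_mul {p q : ℚˣ × ℚˣ} (hp : p ∈ groupoidCone) (hq : q ∈ groupoidCone) :
    p * q ∈ groupoidCone := by
  obtain ⟨a, b⟩ := p
  obtain ⟨a', b'⟩ := q
  rw [Prod.mk_mul_mk]
  have hbb : |((b * b' : ℚˣ) : ℚ)| = |(b : ℚ)| * |(b' : ℚ)| := by
    rw [Units.val_mul, abs_mul]
  have hb0 : (0 : ℚ) ≤ |(b : ℚ)| := abs_nonneg _
  have hb0' : (0 : ℚ) ≤ |(b' : ℚ)| := abs_nonneg _
  rcases hp with ⟨ha, hb⟩ | ⟨ha, hb⟩ <;> rcases hq with ⟨ha', hb'⟩ | ⟨ha', hb'⟩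
  · exact Or.inl ⟨(memC2_mul_left a a' ha).mpr ha', by
      rw [hbb]; exact mul_le_one₀ hb hb0' hb'⟩
  · exact Or.inr ⟨fun h => ha' ((memC2_mul_left a a' ha).mp h), by
      rw [hbb]
      calc |(b : ℚ)| * |(b' : ℚ)| ≤ 1 * |(b' : ℚ)| := by
            exact mul_le_mul_of_nonneg_right hb hb0'
        _ = |(b' : ℚ)| := one_mul _
        _ < 1 := hb'⟩
  · exact Or.inr ⟨fun h => ha ((memC2_mul_right a a' ha').mp h), by
      rw [hbb]
      calc |(b : ℚ)| * |(b' : ℚ)| ≤ |(b : ℚ)| * 1 := by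
            exact mul_le_mul_of_nonneg_left hb' hb0
        _ = |(b : ℚ)| := mul_one _
        _ < 1 := hb⟩
  · have hlt : |((b * b' : ℚˣ) : ℚ)| < 1 := by
      rw [hbb]
      calc |(b : ℚ)| * |(b' : ℚ)| ≤ 1 * |(b' : ℚ)| := by
            exact mul_le_mul_of_nonneg_right hb.le hb0'
        _ = |(b' : ℚ)| := one_mul _
        _ < 1 := hb'
    by_cases h : a * a' ∈ C2
    · exact Or.inl ⟨h, hlt.le⟩
    · exact Or.inr ⟨h, hlt⟩

theorem groupoid_not_schreier :
    (∃ M : Submonoid (ℚˣ × ℚˣ), (M : Set (ℚˣ × ℚˣ)) = groupoidCone) ∧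
    (∀ p ∈ groupoidCone, (p.1⁻¹, p.2) ∈ groupoidCone) ∧
    ((Units.mk0 (5 : ℚ) (by norm_num), Units.mk0 (1/2 : ℚ) (by norm_num)) ∈
      groupoidCone) ∧
    ((Units.mk0 (5 : ℚ) (by norm_num), (1 : ℚˣ)) ∉ groupoidCone) ∧
    ((Units.mk0 (5 : ℚ) (by norm_num), (1 : ℚˣ)) =
      (Units.mk0 (5 : ℚ) (by norm_num), Units.mk0 (1/2 : ℚ) (by norm_num)) *
        ((1 : ℚˣ), Units.mk0 (1/2 : ℚ) (by norm_num))⁻¹) := by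
  have h5 : Units.mk0 (5 : ℚ) (by norm_num) ∉ C2 := by
    rw [memC2_iff]; norm_num
  refine ⟨⟨⟨⟨groupoidCone, fun hp hq => cone_mul hp hq⟩,
      Or.inl ⟨Or.inl rfl, by norm_num⟩⟩, rfl⟩, ?_, ?_, ?_, ?_⟩
  · rintro ⟨a, b⟩ (⟨ha, hb⟩ | ⟨ha, hb⟩)
    · exact Or.inl ⟨(memC2_inv a).mpr ha, hb⟩
    · exact Or.inr ⟨fun h => ha ((memC2_inv a).mp h), hb⟩
  · exact Or.inr ⟨h5, by rw [Units.val_mk0, abs_lt]; norm_num⟩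
  · rintro (⟨ha, _⟩ | ⟨_, hb⟩)
    · exact h5 ha
    · norm_num at hb
  · refine Prod.ext ?_ ?_
    · simp
    · rw [Units.ext_iff]
      norm_num
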